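/- Let V : [1,∞) → (0,∞) be continuous and nondecreasing, and suppose there are constants b > 0, C > 0 and r₀ ≥ 1 such that b ≤ ∫₁^r s/V(s) ds ≤ C·r²/V(r) for all r ≥ r₀. Define H(r) := 1 + ∫₁^r s/V(s) ds. Then there exist λ₀ ∈ (0,1) and C' > 0 such that for every λ ∈ (0, λ₀], setting T := 1/(λ·(log(1/λ))²), one has ∫_T^∞ e^{−λt}/H(√t) dt ≤ C'·T. -/

import Mathlib

open MeasureTheory Filter

section AuxStmt13

lemma aux13_intInt (V : ℝ → ℝ) (hVpos : ∀ r ∈ Set.Ici (1:ℝ), 0 < V r)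
    (hVcont : ContinuousOn V (Set.Ici (1:ℝ))) {a c : ℝ} (ha : 1 ≤ a) (hac : a ≤ c) :
    IntervalIntegrable (fun s => s / V s) volume a c := by
  apply ContinuousOn.intervalIntegrable
  have hsub : Set.uIcc a c ⊆ Set.Ici (1:ℝ) := by
    rw [Set.uIcc_of_le hac]; intro x hx; exact le_trans ha hx.1
  exact ContinuousOn.div continuousOn_id (hVcont.mono hsub)
    (fun x hx => ne_of_gt (hVpos x (hsub hx)))

lemma aux13_G_nonneg (V : ℝ → ℝ) (hVpos : ∀ r ∈ Set.Ici (1:ℝ), 0 < V r)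
    {a c : ℝ} (ha : 1 ≤ a) (hac : a ≤ c) :
    0 ≤ ∫ s in a..c, s / V s := by
  apply intervalIntegral.integral_nonneg hac
  intro u hu
  have h1 : (1:ℝ) ≤ u := le_trans ha hu.1
  have := hVpos u h1
  positivity

lemma aux13_G_mono (V : ℝ → ℝ) (hVpos : ∀ r ∈ Set.Ici (1:ℝ), 0 < V r)
    (hVcont : ContinuousOn V (Set.Ici (1:ℝ))) {a c : ℝ} (ha : 1 ≤ a) (hac : a ≤ c) :
    (∫ s in (1:ℝ)..a, s / V s) ≤ ∫ s in (1:ℝ)..c, s / V s := by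
  have hsplit := intervalIntegral.integral_add_adjacent_intervals
    (aux13_intInt V hVpos hVcont le_rfl ha) (aux13_intInt V hVpos hVcont ha hac)
  have := aux13_G_nonneg V hVpos ha hac
  linarith [hsplit]

lemma aux13_lower (V : ℝ → ℝ) (hVpos : ∀ r ∈ Set.Ici (1:ℝ), 0 < V r)
    (hVcont : ContinuousOn V (Set.Ici (1:ℝ)))
    (b C r₀ : ℝ) (hb : 0 < b) (hC : 0 < C) (hr₀ : 1 ≤ r₀)
    (h : ∀ r ≥ r₀, b ≤ (∫ s in (1:ℝ)..r, s / V s) ∧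
        (∫ s in (1:ℝ)..r, s / V s) ≤ C * r ^ 2 / V r) :
    ∀ r ≥ r₀, b / (2 * C ^ 2) * (Real.log r - Real.log r₀) ^ 2 ≤
      ∫ s in (1:ℝ)..r, s / V s := by
  have hr₀0 : (0:ℝ) < r₀ := lt_of_lt_of_le zero_lt_one hr₀
  -- step 1 : pointwise lower bound b/C * s⁻¹ ≤ s / V s for s ≥ r₀
  have step1 : ∀ s ≥ r₀, b / C * s⁻¹ ≤ s / V s := by
    intro s hs
    have hs1 : (1:ℝ) ≤ s := le_trans hr₀ hs
    have hs0 : (0:ℝ) < s := lt_of_lt_of_le zero_lt_one hs1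
    have hV := hVpos s hs1
    have hb2 : b ≤ C * s ^ 2 / V s := le_trans (h s hs).1 (h s hs).2
    rw [le_div_iff₀ hV] at hb2
    rw [show b / C * s⁻¹ = b / (C * s) by field_simp, div_le_div_iff₀ (by positivity) hV]
    nlinarith
  -- step 2 : log lower bound for the integral
  have step2 : ∀ r ≥ r₀, b / C * (Real.log r - Real.log r₀) ≤ ∫ s in (1:ℝ)..r, s / V s := by
    intro r hr
    have h1r : (1:ℝ) ≤ r := le_trans hr₀ hr
    have hr0 : (0:ℝ) < r := lt_of_lt_of_le zero_lt_one h1r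
    have hsplit := intervalIntegral.integral_add_adjacent_intervals
      (aux13_intInt V hVpos hVcont le_rfl hr₀) (aux13_intInt V hVpos hVcont hr₀ hr)
    have hint1 : IntervalIntegrable (fun s : ℝ => b / C * s⁻¹) volume r₀ r := by
      apply ContinuousOn.intervalIntegrable
      apply ContinuousOn.mul continuousOn_const
      apply ContinuousOn.inv₀ continuousOn_id
      intro x hx
      rw [Set.uIcc_of_le hr] at hx
      exact ne_of_gt (lt_of_lt_of_le hr₀0 hx.1)
    have hcomp : (∫ s in r₀..r, b / C * s⁻¹) ≤ ∫ s in r₀..r, s / V s := by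
      apply intervalIntegral.integral_mono_on hr hint1 (aux13_intInt V hVpos hVcont hr₀ hr)
      intro s hs; exact step1 s hs.1
    have hval : (∫ s in r₀..r, b / C * s⁻¹) = b / C * (Real.log r - Real.log r₀) := by
      rw [intervalIntegral.integral_const_mul, integral_inv_of_pos hr₀0 hr0,
        Real.log_div (ne_of_gt hr0) (ne_of_gt hr₀0)]
    have hGr₀ : b ≤ ∫ s in (1:ℝ)..r₀, s / V s := (h r₀ le_rfl).1
    linarith
  -- step 3 : improved pointwise bound
  have step3 : ∀ s ≥ r₀, b / C ^ 2 * ((Real.log s - Real.log r₀) * s⁻¹) ≤ s / V s := by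
    intro s hs
    have hs1 : (1:ℝ) ≤ s := le_trans hr₀ hs
    have hs0 : (0:ℝ) < s := lt_of_lt_of_le zero_lt_one hs1
    have hV := hVpos s hs1
    have hΔ : 0 ≤ Real.log s - Real.log r₀ := by
      have := Real.log_le_log hr₀0 hs; linarith
    have hA := step2 s hs
    have h2 := (h s hs).2
    rw [le_div_iff₀ hV] at h2
    rw [show b / C ^ 2 * ((Real.log s - Real.log r₀) * s⁻¹)
        = b * (Real.log s - Real.log r₀) / (C ^ 2 * s) by field_simp,
      div_le_div_iff₀ (by positivity) hV]
    have k : b / C * (Real.log s - Real.log r₀) * V s ≤ C * s ^ 2 := by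
      nlinarith [mul_le_mul_of_nonneg_right hA hV.le]
    have e : b * (Real.log s - Real.log r₀) * V s
        = C * (b / C * (Real.log s - Real.log r₀) * V s) := by field_simp
    linarith [e, mul_le_mul_of_nonneg_left k hC.le]
  -- step 4 : integrate the improved bound
  intro r hr
  have h1r : (1:ℝ) ≤ r := le_trans hr₀ hr
  have hr0 : (0:ℝ) < r := lt_of_lt_of_le zero_lt_one h1r
  have hcontΔ : ContinuousOn (fun s : ℝ => (Real.log s - Real.log r₀) * s⁻¹)
      (Set.uIcc r₀ r) := by
    rw [Set.uIcc_of_le hr]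
    have hne : ∀ x ∈ Set.Icc r₀ r, x ≠ 0 :=
      fun x hx => ne_of_gt (lt_of_lt_of_le hr₀0 hx.1)
    exact ((Real.continuousOn_log.mono (fun x hx => hne x hx)).sub
      continuousOn_const).mul (ContinuousOn.inv₀ continuousOn_id hne)
  have hintΔ : IntervalIntegrable (fun s : ℝ => (Real.log s - Real.log r₀) * s⁻¹)
      volume r₀ r := hcontΔ.intervalIntegrable
  have hderiv : ∀ s ∈ Set.uIcc r₀ r,
      HasDerivAt (fun u : ℝ => (Real.log u - Real.log r₀) ^ 2 / 2)
        ((Real.log s - Real.log r₀) * s⁻¹) s := by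
    intro s hs
    rw [Set.uIcc_of_le hr] at hs
    have hs0 : (0:ℝ) < s := lt_of_lt_of_le hr₀0 hs.1
    have h1 : HasDerivAt (fun u : ℝ => Real.log u - Real.log r₀) s⁻¹ s :=
      (Real.hasDerivAt_log (ne_of_gt hs0)).sub_const _
    have h2 := (h1.pow 2).div_const 2
    refine h2.congr_deriv ?_
    push_cast; ring
  have hFTC := intervalIntegral.integral_eq_sub_of_hasDerivAt hderiv hintΔ
  have hval : (∫ s in r₀..r, b / C ^ 2 * ((Real.log s - Real.log r₀) * s⁻¹))
      = b / (2 * C ^ 2) * (Real.log r - Real.log r₀) ^ 2 := by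
    rw [intervalIntegral.integral_const_mul, hFTC]
    ring
  have hcomp : (∫ s in r₀..r, b / C ^ 2 * ((Real.log s - Real.log r₀) * s⁻¹))
      ≤ ∫ s in r₀..r, s / V s := by
    apply intervalIntegral.integral_mono_on hr (hintΔ.const_mul _)
      (aux13_intInt V hVpos hVcont hr₀ hr)
    intro s hs; exact step3 s hs.1
  have hsplit := intervalIntegral.integral_add_adjacent_intervals
    (aux13_intInt V hVpos hVcont le_rfl hr₀) (aux13_intInt V hVpos hVcont hr₀ hr)
  have hGr₀ : b ≤ ∫ s in (1:ℝ)..r₀, s / V s := (h r₀ le_rfl).1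
  linarith

lemma aux13_exp_int (l T : ℝ) (hl : 0 < l) :
    IntegrableOn (fun t : ℝ => Real.exp (-(l * t))) (Set.Ici T) := by
  rw [integrableOn_Ici_iff_integrableOn_Ioi]
  simpa [neg_mul] using exp_neg_integrableOn_Ioi T hl

lemma aux13_exp_val (l T : ℝ) (hl : 0 < l) (hT : 0 ≤ T) :
    (∫ t in Set.Ici T, Real.exp (-(l * t))) ≤ l⁻¹ := by
  have h1 : (∫ t in Set.Ici T, Real.exp (-(l * t)))
      ≤ ∫ t in Set.Ici 0, Real.exp (-(l * t)) := by
    apply setIntegral_mono_set (aux13_exp_int l 0 hl)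
    · filter_upwards with t using (Real.exp_pos _).le
    · exact HasSubset.Subset.eventuallyLE (Set.Ici_subset_Ici.mpr hT)
  have h2 : (∫ t in Set.Ici (0:ℝ), Real.exp (-(l * t))) = l⁻¹ := by
    rw [integral_Ici_eq_integral_Ioi]
    have := integral_comp_mul_left_Ioi (fun u : ℝ => Real.exp (-u)) 0 hl
    simp only [mul_zero] at this
    rw [this, integral_exp_neg_Ioi, neg_zero, Real.exp_zero, smul_eq_mul, mul_one]
  linarith

lemma aux13_eventually (r₀ : ℝ) : ∀ᶠ l in nhdsWithin (0:ℝ) (Set.Ioi 0),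
    l < 1 ∧ 8 * max (Real.log r₀) 1 ≤ Real.log (1 / l) ∧
      Real.sqrt l * (Real.log (1 / l)) ^ 2 ≤ 1 := by
  have hlog : Tendsto (fun l : ℝ => Real.log (1 / l)) (nhdsWithin 0 (Set.Ioi 0)) atTop := by
    have h2 : Tendsto (fun l : ℝ => -Real.log l) (nhdsWithin 0 (Set.Ioi 0)) atTop :=
      tendsto_neg_atBot_atTop.comp Real.tendsto_log_nhdsGT_zero
    apply h2.congr
    intro l; rw [one_div, Real.log_inv]
  have hsq : Tendsto (fun l : ℝ => Real.sqrt l * (Real.log (1 / l)) ^ 2)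
      (nhdsWithin 0 (Set.Ioi 0)) (nhds 0) := by
    have h0 : Tendsto (fun x : ℝ => Real.log x * x ^ (4⁻¹ : ℝ))
        (nhdsWithin 0 (Set.Ioi 0)) (nhds 0) :=
      tendsto_log_mul_rpow_nhdsGT_zero (by norm_num)
    have h1 := h0.mul h0
    rw [mul_zero] at h1
    apply h1.congr'
    filter_upwards [self_mem_nhdsWithin] with x hx
    have hx0 : (0:ℝ) < x := hx
    have : x ^ (4⁻¹:ℝ) * x ^ (4⁻¹:ℝ) = Real.sqrt x := by
      rw [← Real.rpow_add hx0, Real.sqrt_eq_rpow]; norm_num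
    rw [one_div, Real.log_inv]
    nlinarith [this]
  filter_upwards [Ioo_mem_nhdsGT_of_mem (show (0:ℝ) ∈ Set.Ico (0:ℝ) 1 by simp),
    hlog.eventually_ge_atTop (8 * max (Real.log r₀) 1),
    hsq.eventually (eventually_le_nhds (show (0:ℝ) < 1 by norm_num))] with l h1 h2 h3
  exact ⟨h1.2, h2, h3⟩

end AuxStmt13

/-- For a continuous nondecreasing positive `V` on `[1,∞)` with
`b ≤ ∫₁^r s/V(s) ds ≤ C r²/V(r)` for `r ≥ r₀`, and `H(r) = 1 + ∫₁^r s/V(s) ds`,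
there are `λ₀ ∈ (0,1)` and `C' > 0` such that for `λ ∈ (0,λ₀]`, with
`T = 1/(λ (log(1/λ))²)`, one has `∫_T^∞ e^{−λt}/H(√t) dt ≤ C' T`. -/
theorem stmt_13 (V : ℝ → ℝ)
    (hVpos : ∀ r ∈ Set.Ici (1:ℝ), 0 < V r)
    (hVcont : ContinuousOn V (Set.Ici (1:ℝ)))
    (hVmono : MonotoneOn V (Set.Ici (1:ℝ)))
    (b C r₀ : ℝ) (hb : 0 < b) (hC : 0 < C) (hr₀ : 1 ≤ r₀)
    (h : ∀ r ≥ r₀, b ≤ (∫ s in (1:ℝ)..r, s / V s) ∧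
        (∫ s in (1:ℝ)..r, s / V s) ≤ C * r ^ 2 / V r) :
    ∃ l₀ ∈ Set.Ioo (0:ℝ) 1, ∃ C' > (0:ℝ), ∀ l ∈ Set.Ioc (0:ℝ) l₀,
      (∫ t in Set.Ici (1 / (l * (Real.log (1 / l)) ^ 2)),
        Real.exp (-(l * t)) / (1 + ∫ s in (1:ℝ)..Real.sqrt t, s / V s)) ≤
        C' * (1 / (l * (Real.log (1 / l)) ^ 2)) := by
  obtain ⟨u, hu, hsub⟩ :=
    mem_nhdsGT_iff_exists_Ioc_subset.mp (aux13_eventually r₀)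
  have hu0 : (0:ℝ) < u := hu
  refine ⟨min u (1/2), ⟨lt_min hu0 (by norm_num),
    lt_of_le_of_lt (min_le_right _ _) (by norm_num)⟩,
    128 * C ^ 2 / b, by positivity, ?_⟩
  intro l hl
  obtain ⟨hl0, hlu⟩ := hl
  obtain ⟨hl1, hlog8, hsml⟩ := hsub ⟨hl0, le_trans hlu (min_le_left _ _)⟩
  set L := Real.log (1 / l) with hLdef
  have hmax1 : (1:ℝ) ≤ max (Real.log r₀) 1 := le_max_right _ _
  have hL8 : 8 ≤ L := le_trans (by nlinarith) hlog8
  have hL0 : (0:ℝ) < L := by linarith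
  have hlL2 : 0 < l * L ^ 2 := by positivity
  set T := 1 / (l * L ^ 2) with hTdef
  have hT0 : 0 < T := by positivity
  have hsl0 : 0 < Real.sqrt l := Real.sqrt_pos.mpr hl0
  have hlsq : l * L ^ 2 ≤ Real.sqrt l := by
    have hself : l = Real.sqrt l * Real.sqrt l := (Real.mul_self_sqrt hl0.le).symm
    calc l * L ^ 2 = Real.sqrt l * (Real.sqrt l * L ^ 2) := by rw [← mul_assoc, ← hself]
      _ ≤ Real.sqrt l * 1 := mul_le_mul_of_nonneg_left hsml hsl0.le
      _ = Real.sqrt l := mul_one _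
  have hTge : 1 / Real.sqrt l ≤ T := by
    rw [hTdef]
    exact one_div_le_one_div_of_le hlL2 hlsq
  have hsl1 : Real.sqrt l ≤ 1 := by
    rw [show (1:ℝ) = Real.sqrt 1 by simp]
    exact Real.sqrt_le_sqrt hl1.le
  have hT1 : 1 ≤ T := le_trans (one_le_one_div hsl0 hsl1) hTge
  have hlogT : L / 2 ≤ Real.log T := by
    have hmono := Real.log_le_log (by positivity) hTge
    have hlog1s : Real.log (1 / Real.sqrt l) = L / 2 := by
      rw [one_div, Real.log_inv, Real.log_sqrt hl0.le, hLdef, one_div, Real.log_inv]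
      ring
    linarith
  have hsqrtT1 : 1 ≤ Real.sqrt T := by
    rw [show (1:ℝ) = Real.sqrt 1 by simp]
    exact Real.sqrt_le_sqrt hT1
  have hlogsT : L / 4 ≤ Real.log (Real.sqrt T) := by
    rw [Real.log_sqrt hT0.le]; linarith
  have hlogr₀ : Real.log r₀ ≤ L / 8 := by
    have := le_max_left (Real.log r₀) 1; linarith
  have hr₀T : r₀ ≤ Real.sqrt T := by
    have hexp := Real.exp_le_exp.mpr
      (show Real.log r₀ ≤ Real.log (Real.sqrt T) by linarith)
    rwa [Real.exp_log (by positivity), Real.exp_log (by positivity)] at hexp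
  have hlow := aux13_lower V hVpos hVcont b C r₀ hb hC hr₀ h (Real.sqrt T) hr₀T
  have hΔ : L / 8 ≤ Real.log (Real.sqrt T) - Real.log r₀ := by linarith
  set H₀ := 1 + ∫ s in (1:ℝ)..Real.sqrt T, s / V s with hH₀def
  have hH : b / (2 * C ^ 2) * (L / 8) ^ 2 ≤ H₀ := by
    have h2 : b / (2 * C ^ 2) * (L / 8) ^ 2
        ≤ b / (2 * C ^ 2) * (Real.log (Real.sqrt T) - Real.log r₀) ^ 2 := by
      apply mul_le_mul_of_nonneg_left _ (by positivity)
      exact pow_le_pow_left₀ (by positivity) hΔ 2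
    rw [hH₀def]; linarith
  have hH0 : 0 < H₀ := lt_of_lt_of_le (by positivity) hH
  have hden : ∀ t ∈ Set.Ici T, H₀ ≤ 1 + ∫ s in (1:ℝ)..Real.sqrt t, s / V s := by
    intro t ht
    have hst : Real.sqrt T ≤ Real.sqrt t := Real.sqrt_le_sqrt ht
    have hGmono := aux13_G_mono V hVpos hVcont hsqrtT1 hst
    rw [hH₀def]; linarith
  have hbound : (∫ t in Set.Ici T,
        Real.exp (-(l * t)) / (1 + ∫ s in (1:ℝ)..Real.sqrt t, s / V s))
      ≤ ∫ t in Set.Ici T, Real.exp (-(l * t)) * H₀⁻¹ := by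
    apply integral_mono_of_nonneg
    · filter_upwards [ae_restrict_mem measurableSet_Ici] with t ht
      have h1 := lt_of_lt_of_le hH0 (hden t ht)
      positivity
    · exact ((aux13_exp_int l T hl0).mul_const _)
    · filter_upwards [ae_restrict_mem measurableSet_Ici] with t ht
      rw [show Real.exp (-(l * t)) * H₀⁻¹ = Real.exp (-(l * t)) / H₀ by
        rw [div_eq_mul_inv]]
      exact div_le_div_of_nonneg_left (Real.exp_pos _).le hH0 (hden t ht)
  have hval : (∫ t in Set.Ici T, Real.exp (-(l * t)) * H₀⁻¹) ≤ H₀⁻¹ * l⁻¹ := by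
    rw [integral_mul_const]
    calc (∫ t in Set.Ici T, Real.exp (-(l * t))) * H₀⁻¹
        ≤ l⁻¹ * H₀⁻¹ :=
          mul_le_mul_of_nonneg_right (aux13_exp_val l T hl0 hT0.le)
            (inv_nonneg.mpr hH0.le)
      _ = H₀⁻¹ * l⁻¹ := mul_comm _ _
  have hinv : H₀⁻¹ ≤ (b / (2 * C ^ 2) * (L / 8) ^ 2)⁻¹ :=
    inv_anti₀ (by positivity) hH
  have hfinal : H₀⁻¹ * l⁻¹ ≤ (128 * C ^ 2 / b) * T := by
    have h3 : H₀⁻¹ * l⁻¹ ≤ (b / (2 * C ^ 2) * (L / 8) ^ 2)⁻¹ * l⁻¹ :=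
      mul_le_mul_of_nonneg_right hinv (inv_nonneg.mpr hl0.le)
    have h4 : (b / (2 * C ^ 2) * (L / 8) ^ 2)⁻¹ * l⁻¹ = (128 * C ^ 2 / b) * T := by
      rw [hTdef]
      field_simp
      ring
    linarith
  linarith
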